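/- For all real x₁, x₂, the Euclidean inner product of the layer-normalized quadratic embeddings satisfies LN(E_quad(x₁)) · LN(E_quad(x₂)) = [4(1 − x₁²/2)(1 − x₂²/2) + 4x₁x₂] / √((1 + x₁⁴/4)(1 + x₂⁴/4)) = [4 − 2(x₁ − x₂)² + x₁²x₂²] / √((1 + x₁⁴/4)(1 + x₂⁴/4)). -/

import Mathlib

/-- Population mean of a vector `v ∈ ℝ^d`: `μ(v) = (1/d)·Σᵢ vᵢ`. -/
noncomputable def popMean {d : ℕ} (v : Fin d → ℝ) : ℝ := (∑ i, v i) / d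

/-- Population standard deviation of a vector `v ∈ ℝ^d`:
`σ(v) = √((1/d)·Σᵢ (vᵢ − μ(v))²)`. -/
noncomputable def popStd {d : ℕ} (v : Fin d → ℝ) : ℝ :=
  Real.sqrt ((∑ i, (v i - popMean v) ^ 2) / d)

/-- LayerNorm with unit gain and zero bias: `LN(v) = (v − μ(v)·𝟙)/σ(v)`. -/
noncomputable def layerNorm {d : ℕ} (v : Fin d → ℝ) : Fin d → ℝ :=
  fun i => (v i - popMean v) / popStd v

/-- Quadratic positional embedding `E_quad(x) = (1 − x²/2, −(1 − x²/2), x, −x)`. -/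
noncomputable def Equad (x : ℝ) : Fin 4 → ℝ :=
  ![1 - x ^ 2 / 2, -(1 - x ^ 2 / 2), x, -x]

/-- The Euclidean inner product of the layer-normalized quadratic embeddings
satisfies
`LN(E_quad(x₁)) · LN(E_quad(x₂)) = [4(1 − x₁²/2)(1 − x₂²/2) + 4x₁x₂] / √((1 + x₁⁴/4)(1 + x₂⁴/4))`
`= [4 − 2(x₁ − x₂)² + x₁²x₂²] / √((1 + x₁⁴/4)(1 + x₂⁴/4))`. -/
lemma equad_mean (x : ℝ) : popMean (Equad x) = 0 := by
  simp [popMean, Equad, Fin.sum_univ_four]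

lemma equad_std (x : ℝ) : popStd (Equad x) = Real.sqrt ((1 + x ^ 4 / 4) / 2) := by
  unfold popStd
  rw [equad_mean]
  congr 1
  simp [Equad, Fin.sum_univ_four]
  ring

theorem equad_layerNorm_dot (x₁ x₂ : ℝ) :
    (∑ i, layerNorm (Equad x₁) i * layerNorm (Equad x₂) i =
      (4 * (1 - x₁ ^ 2 / 2) * (1 - x₂ ^ 2 / 2) + 4 * (x₁ * x₂)) /
        Real.sqrt ((1 + x₁ ^ 4 / 4) * (1 + x₂ ^ 4 / 4))) ∧
    (∑ i, layerNorm (Equad x₁) i * layerNorm (Equad x₂) i =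
      (4 - 2 * (x₁ - x₂) ^ 2 + x₁ ^ 2 * x₂ ^ 2) /
        Real.sqrt ((1 + x₁ ^ 4 / 4) * (1 + x₂ ^ 4 / 4))) := by
  have hP₁ : (0:ℝ) < 1 + x₁ ^ 4 / 4 := by positivity
  have hP₂ : (0:ℝ) < 1 + x₂ ^ 4 / 4 := by positivity
  have hs₁ : Real.sqrt ((1 + x₁ ^ 4 / 4) / 2) > 0 := Real.sqrt_pos.2 (by positivity)
  have hs₂ : Real.sqrt ((1 + x₂ ^ 4 / 4) / 2) > 0 := Real.sqrt_pos.2 (by positivity)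
  have hmul : Real.sqrt ((1 + x₁ ^ 4 / 4) / 2) * Real.sqrt ((1 + x₂ ^ 4 / 4) / 2)
      = Real.sqrt ((1 + x₁ ^ 4 / 4) * (1 + x₂ ^ 4 / 4)) / 2 := by
    rw [← Real.sqrt_mul (by positivity)]
    rw [show ((1 + x₁ ^ 4 / 4) / 2) * ((1 + x₂ ^ 4 / 4) / 2)
        = ((1 + x₁ ^ 4 / 4) * (1 + x₂ ^ 4 / 4)) / 4 by ring]
    rw [Real.sqrt_div (by positivity),
      show Real.sqrt 4 = 2 by rw [show (4:ℝ) = 2 ^ 2 by norm_num, Real.sqrt_sq (by norm_num)]]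
  have hsp : Real.sqrt ((1 + x₁ ^ 4 / 4) * (1 + x₂ ^ 4 / 4)) > 0 :=
    Real.sqrt_pos.2 (by positivity)
  have key : ∑ i, layerNorm (Equad x₁) i * layerNorm (Equad x₂) i =
      (4 * (1 - x₁ ^ 2 / 2) * (1 - x₂ ^ 2 / 2) + 4 * (x₁ * x₂)) /
        Real.sqrt ((1 + x₁ ^ 4 / 4) * (1 + x₂ ^ 4 / 4)) := by
    simp only [layerNorm, equad_mean, equad_std, sub_zero, Fin.sum_univ_four]
    simp only [Equad, Matrix.cons_val_zero, Matrix.cons_val_one, Matrix.head_cons,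
      Matrix.cons_val_two, Matrix.tail_cons, Matrix.cons_val_three]
    rw [div_mul_div_comm, div_mul_div_comm, div_mul_div_comm, div_mul_div_comm,
      ← add_div, ← add_div, ← add_div, hmul, div_div_eq_mul_div]
    congr 1
    ring
  exact ⟨key, key.trans (by ring_nf)⟩
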